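/- Fix integers m ≥ 1 and k ≥ 2. Then the quantity m·n·(H_{mn} − H_{mn−mk}) − (m·n / C(mn, k)) · ( ∑_{j=0}^{mk−k−1} C(k−1+j, k−1) · H_{mn−(k+j)} − H_{mn−mk} · C(mk−1, k) ) tends to m·k as n → ∞ (along the filter atTop on ℕ, restricted to n ≥ k). -/

import Mathlib

open Filter

/-- The `j`-th harmonic number `H_j = ∑_{i=1}^j 1/i`, as a real number. -/
noncomputable def H (j : ℕ) : ℝ := ∑ i ∈ Finset.range j, (1 : ℝ) / (i + 1)

lemma H_nonneg (j : ℕ) : 0 ≤ H j :=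
  Finset.sum_nonneg fun i _ => by positivity

lemma H_mono : Monotone H := fun a b hab =>
  Finset.sum_le_sum_of_subset_of_nonneg (Finset.range_subset_range.2 hab)
    (fun i _ _ => by positivity)

lemma H_eq_harmonic (j : ℕ) : H j = (harmonic j : ℝ) := by
  simp [H, harmonic, one_div]

lemma H_le_one_add_log (j : ℕ) : H j ≤ 1 + Real.log j := by
  rw [H_eq_harmonic]; exact_mod_cast harmonic_le_one_add_log j

lemma tendsto_div_add (c : ℝ) : Tendsto (fun x : ℝ => x / (x + c)) atTop (nhds 1) := by
  have h0 : Tendsto (fun x : ℝ => x + c) atTop atTop :=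
    tendsto_atTop_add_const_right _ c tendsto_id
  have h1 : Tendsto (fun x : ℝ => 1 - c / (x + c)) atTop (nhds 1) := by
    have h2 := (tendsto_const_nhds : Tendsto (fun _ : ℝ => c) atTop (nhds c)).div_atTop h0
    simpa using (tendsto_const_nhds : Tendsto (fun _ : ℝ => (1:ℝ)) atTop (nhds 1)).sub h2
  refine h1.congr' ?_
  filter_upwards [eventually_gt_atTop (|c| + 1)] with x hx
  have hxc : 0 < x + c := by
    have := abs_le.1 (le_of_lt (lt_of_le_of_lt (le_refl |c|) (by linarith : |c| < x)))
    linarith [neg_abs_le c]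
  field_simp
  ring

lemma choose_two_le_choose {n r : ℕ} (h2 : 2 ≤ r) (hr : r ≤ n / 2) :
    n.choose 2 ≤ n.choose r := by
  induction r, h2 using Nat.le_induction with
  | base => exact le_refl _
  | succ s hs ih =>
      have hs' : s ≤ n / 2 := le_trans (Nat.le_succ s) hr
      exact le_trans (ih hs') (Nat.choose_le_succ_of_lt_half_left (by omega))

lemma tendsto_aux_log (c : ℝ) :
    Tendsto (fun x : ℝ => c * (1 + Real.log x) / (x - 1)) atTop (nhds 0) := by
  have hlog : Tendsto (fun x : ℝ => (1 + Real.log x) / x) atTop (nhds 0) := by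
    have h1 : Tendsto (fun x : ℝ => x⁻¹ + Real.log x / x) atTop (nhds 0) := by
      have := tendsto_inv_atTop_zero (𝕜 := ℝ)
      simpa using this.add Real.isLittleO_log_id_atTop.tendsto_div_nhds_zero
    refine h1.congr' ?_
    filter_upwards [eventually_gt_atTop (0:ℝ)] with x hx
    field_simp
  have hrat : Tendsto (fun x : ℝ => x / (x - 1)) atTop (nhds 1) := by
    have := tendsto_div_add (-1)
    simpa [sub_eq_add_neg] using this
  have hmul : Tendsto (fun x : ℝ => c * ((1 + Real.log x) / x * (x / (x - 1))))
      atTop (nhds 0) := by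
    have := (hlog.mul hrat).const_mul c
    simpa using this
  refine hmul.congr' ?_
  filter_upwards [eventually_gt_atTop (1:ℝ)] with x hx
  have hx0 : x ≠ 0 := by linarith
  have hx1 : x - 1 ≠ 0 := by linarith
  field_simp

theorem stmt_6 (m k : ℕ) (hm : 1 ≤ m) (hk : 2 ≤ k) :
    Tendsto
      (fun n : ℕ =>
        (m : ℝ) * n * (H (m * n) - H (m * n - m * k)) -
          ((m : ℝ) * n / ((m * n).choose k)) *
            (∑ j ∈ Finset.range (m * k - k),
                ((k - 1 + j).choose (k - 1) : ℝ) * H (m * n - (k + j)) -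
              H (m * n - m * k) * ((m * k - 1).choose k)))
      atTop (nhds ((m : ℝ) * k)) := by
  have hN : Tendsto (fun n : ℕ => ((m * n : ℕ) : ℝ)) atTop atTop := by
    apply tendsto_natCast_atTop_atTop.comp
    exact tendsto_atTop_mono (fun n => Nat.le_mul_of_pos_left n (by omega)) tendsto_id
  -- Part A
  have hA : Tendsto (fun n : ℕ => (m : ℝ) * n * (H (m * n) - H (m * n - m * k)))
      atTop (nhds ((m : ℝ) * k)) := by
    have key : (fun n : ℕ => (m : ℝ) * n * (H (m * n) - H (m * n - m * k))) =ᶠ[atTop]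
        (fun n : ℕ => ∑ j ∈ Finset.range (m * k),
          ((m * n : ℕ) : ℝ) / (((m * n : ℕ) : ℝ) + ((j : ℝ) + 1 - (m * k : ℕ)))) := by
      filter_upwards [eventually_ge_atTop k] with n hn
      have hmk : m * k ≤ m * n := Nat.mul_le_mul_left m hn
      have hHdiff : H (m * n) - H (m * n - m * k) =
          ∑ j ∈ Finset.range (m * k),
            (1 : ℝ) / (((m * n - m * k : ℕ) : ℝ) + j + 1) := by
        have hsub : m * n - m * k ≤ m * n := Nat.sub_le _ _
        have hrange : m * n - (m * n - m * k) = m * k := by omega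
        have e2 := Finset.sum_Ico_eq_sum_range (f := fun i => (1:ℝ)/(i+1))
          (m := m * n - m * k) (n := m * n)
        rw [H, H, ← Finset.sum_Ico_eq_sub _ hsub, e2, hrange]
        refine Finset.sum_congr rfl fun j _ => ?_
        push_cast
        ring_nf
      rw [hHdiff, Finset.mul_sum]
      refine Finset.sum_congr rfl fun j hj => ?_
      rw [Nat.cast_sub hmk]
      push_cast
      rw [mul_one_div]
      ring_nf
    have lim : Tendsto (fun n : ℕ => ∑ j ∈ Finset.range (m * k),
        ((m * n : ℕ) : ℝ) / (((m * n : ℕ) : ℝ) + ((j : ℝ) + 1 - (m * k : ℕ))))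
        atTop (nhds ((m : ℝ) * k)) := by
      have h := tendsto_finset_sum (Finset.range (m * k))
        (fun j _ => (tendsto_div_add ((j : ℝ) + 1 - (m * k : ℕ))).comp hN)
      simpa [Finset.sum_const, mul_comm] using h
    exact lim.congr' key.symm
  -- Part B
  set C : ℝ := ((m * k - 1).choose k : ℝ) with hC
  set K : ℝ := (∑ j ∈ Finset.range (m * k - k), ((k - 1 + j).choose (k - 1) : ℝ)) + C with hK
  have hC0 : (0:ℝ) ≤ C := by rw [hC]; positivity
  have hK0 : 0 ≤ K := by
    apply add_nonneg
    · exact Finset.sum_nonneg fun j _ => by positivity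
    · exact hC0
  have hB : Tendsto (fun n : ℕ => ((m : ℝ) * n / ((m * n).choose k)) *
      (∑ j ∈ Finset.range (m * k - k),
          ((k - 1 + j).choose (k - 1) : ℝ) * H (m * n - (k + j)) -
        H (m * n - m * k) * C)) atTop (nhds 0) := by
    apply squeeze_zero_norm'
      (a := fun n : ℕ => 2 * K * (1 + Real.log ((m * n : ℕ) : ℝ)) / (((m * n : ℕ) : ℝ) - 1))
    · filter_upwards [eventually_ge_atTop (2 * k)] with n hn
      have hmn2k : 2 * k ≤ m * n := le_trans hn (Nat.le_mul_of_pos_left n (by omega))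
      have hmn4 : 4 ≤ m * n := by omega
      have hkhalf : k ≤ m * n / 2 := Nat.le_div_iff_mul_le (by norm_num) |>.2 (by omega)
      have hch2 : (m * n).choose 2 ≤ (m * n).choose k := choose_two_le_choose hk hkhalf
      have hch2pos : 0 < ((m * n).choose 2 : ℝ) := by
        have : 0 < (m * n).choose 2 := Nat.choose_pos (by omega)
        exact_mod_cast this
      have hchpos : 0 < ((m * n).choose k : ℝ) := by
        have : 0 < (m * n).choose k := Nat.choose_pos (by omega)
        exact_mod_cast this
      have hmn1 : (1 : ℝ) < ((m * n : ℕ) : ℝ) := by exact_mod_cast (by omega : 1 < m * n)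
      -- bound on the bracket
      have hbr : |∑ j ∈ Finset.range (m * k - k),
            ((k - 1 + j).choose (k - 1) : ℝ) * H (m * n - (k + j)) -
          H (m * n - m * k) * C| ≤ K * H (m * n) := by
        have h1 : |∑ j ∈ Finset.range (m * k - k),
            ((k - 1 + j).choose (k - 1) : ℝ) * H (m * n - (k + j))| ≤
            (∑ j ∈ Finset.range (m * k - k), ((k - 1 + j).choose (k - 1) : ℝ)) * H (m * n) := by
          refine le_trans (Finset.abs_sum_le_sum_abs _ _) ?_
          rw [Finset.sum_mul]
          refine Finset.sum_le_sum fun j _ => ?_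
          rw [abs_of_nonneg (mul_nonneg (by positivity) (H_nonneg _))]
          exact mul_le_mul_of_nonneg_left (H_mono (Nat.sub_le _ _)) (by positivity)
        have h2 : |H (m * n - m * k) * C| ≤ C * H (m * n) := by
          rw [abs_of_nonneg (mul_nonneg (H_nonneg _) hC0), mul_comm]
          exact mul_le_mul_of_nonneg_left (H_mono (Nat.sub_le _ _)) hC0
        refine le_trans (abs_sub _ _) ?_
        rw [hK, add_mul]
        exact add_le_add h1 h2
      -- bound on the prefactor
      have hpre : (m : ℝ) * n / ((m * n).choose k) ≤ 2 / (((m * n : ℕ) : ℝ) - 1) := by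
        have hmc : (m : ℝ) * n = ((m * n : ℕ) : ℝ) := by push_cast; ring
        rw [hmc]
        have step1 : ((m * n : ℕ) : ℝ) / ((m * n).choose k) ≤
            ((m * n : ℕ) : ℝ) / ((m * n).choose 2) := by
          apply div_le_div_of_nonneg_left (by positivity) hch2pos
          exact_mod_cast hch2
        refine step1.trans ?_
        rw [Nat.cast_choose_two]
        have hmm1 : (0:ℝ) < ((m * n : ℕ) : ℝ) - 1 := by linarith
        have hden : (0:ℝ) < ((m * n : ℕ) : ℝ) * (((m * n : ℕ) : ℝ) - 1) / 2 := by
          positivity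
        rw [div_le_div_iff₀ hden hmm1]
        nlinarith [hmm1]
      have hHb : H (m * n) ≤ 1 + Real.log ((m * n : ℕ) : ℝ) := H_le_one_add_log _
      have hH0 : 0 ≤ H (m * n) := H_nonneg _
      have hlog0 : (0:ℝ) ≤ 1 + Real.log ((m * n : ℕ) : ℝ) := le_trans hH0 hHb
      have hpre0 : 0 ≤ (m : ℝ) * n / ((m * n).choose k) := by positivity
      rw [norm_mul, Real.norm_eq_abs, Real.norm_eq_abs, abs_of_nonneg hpre0]
      calc (m : ℝ) * n / ((m * n).choose k) * |_| ≤
          (2 / (((m * n : ℕ) : ℝ) - 1)) * (K * H (m * n)) := by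
            apply mul_le_mul hpre hbr (abs_nonneg _)
            exact div_nonneg (by norm_num) (by linarith)
        _ ≤ (2 / (((m * n : ℕ) : ℝ) - 1)) * (K * (1 + Real.log ((m * n : ℕ) : ℝ))) := by
            apply mul_le_mul_of_nonneg_left _ (div_nonneg (by norm_num) (by linarith))
            exact mul_le_mul_of_nonneg_left hHb hK0
        _ = 2 * K * (1 + Real.log ((m * n : ℕ) : ℝ)) / (((m * n : ℕ) : ℝ) - 1) := by
            ring
    · exact (tendsto_aux_log (2 * K)).comp hN
  have := hA.sub hB
  simpa using this
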